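/- Let P be a symmetric positive definite 6×6 real matrix with Q = P⁻¹ and α > 0 satisfying Q Aᵀ + A Q − 2 B Bᵀ ⪯ −α Q. Let ρ > 0 be such that the closed ball {v ∈ ℝ³ : ‖v‖₂² ≤ ρ} is contained in V_c. Then for every γ ≥ 1 and every ξ ∈ ℝ⁶ with ‖BᵀPξ‖₂² ≤ ρ, one has γ·λ*(−γBᵀPξ) ≥ 1 and 2·ξᵀP(Aξ + B·sat(−γBᵀPξ)) ≤ −α·ξᵀPξ, i.e., the Lyapunov function V(ξ) = ξᵀPξ decreases at exponential rate α along the saturated closed loop. -/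

import Mathlib

open Matrix Set

noncomputable section

/-- The convex input-constraint set `V_c` in the flat output space. -/
def Vc (g Tmax εmax : ℝ) : Set (Fin 3 → ℝ) :=
  {v | (v 0) ^ 2 + (v 1) ^ 2 + (v 2 + g) ^ 2 ≤ Tmax ^ 2 ∧
       (v 0) ^ 2 + (v 1) ^ 2 ≤ (Real.tan εmax) ^ 2 * (v 2 + g) ^ 2 ∧
       -g ≤ v 2}

/-- Saturation factor `λ*(w) = sup {λ ∈ (0,1] : λ w ∈ K}`. -/
def lamStar (K : Set (Fin 3 → ℝ)) (w : Fin 3 → ℝ) : ℝ :=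
  sSup {l : ℝ | l ∈ Set.Ioc (0 : ℝ) 1 ∧ l • w ∈ K}

/-- Saturated vector `sat(w) = λ*(w) w`. -/
def sat (K : Set (Fin 3 → ℝ)) (w : Fin 3 → ℝ) : Fin 3 → ℝ :=
  lamStar K w • w

/-- Quadcopter state matrix `A = [[0,I],[0,0]]`. -/
def quadA : Matrix (Fin 3 ⊕ Fin 3) (Fin 3 ⊕ Fin 3) ℝ :=
  Matrix.fromBlocks 0 1 0 0

/-- Quadcopter input matrix `B = [0; I]`. -/
def quadB : Matrix (Fin 3 ⊕ Fin 3) (Fin 3) ℝ :=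
  Matrix.of (Sum.elim (fun _ _ => (0 : ℝ)) (fun i j => if i = j then 1 else 0))

theorem stmt4
    (g Tmax εmax : ℝ) (hg : 0 < g) (hT : 0 < Tmax) (hεmax : εmax ∈ Set.Ioo 0 (Real.pi / 2))
    (P : Matrix (Fin 3 ⊕ Fin 3) (Fin 3 ⊕ Fin 3) ℝ) (hPsym : P.IsSymm) (hP : P.PosDef)
    (Q : Matrix (Fin 3 ⊕ Fin 3) (Fin 3 ⊕ Fin 3) ℝ) (hQ : Q = P⁻¹)
    (α : ℝ) (hα : 0 < α)
    (hLMI : (-(α • Q) - (Q * quadAᵀ + quadA * Q - (2 : ℝ) • (quadB * quadBᵀ))).PosSemidef)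
    (ρ : ℝ) (hρ : 0 < ρ)
    (hball : {v : Fin 3 → ℝ | v ⬝ᵥ v ≤ ρ} ⊆ Vc g Tmax εmax)
    (γ : ℝ) (hγ : 1 ≤ γ)
    (ξ : Fin 3 ⊕ Fin 3 → ℝ)
    (hξ : (quadBᵀ *ᵥ (P *ᵥ ξ)) ⬝ᵥ (quadBᵀ *ᵥ (P *ᵥ ξ)) ≤ ρ) :
    1 ≤ γ * lamStar (Vc g Tmax εmax) (-(γ • (quadBᵀ *ᵥ (P *ᵥ ξ)))) ∧
    2 * (ξ ⬝ᵥ (P *ᵥ (quadA *ᵥ ξ +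
        quadB *ᵥ sat (Vc g Tmax εmax) (-(γ • (quadBᵀ *ᵥ (P *ᵥ ξ))))))) ≤
      -α * (ξ ⬝ᵥ (P *ᵥ ξ)) := by
  have hγ0 : (0 : ℝ) < γ := lt_of_lt_of_le one_pos hγ
  set y : Fin 3 ⊕ Fin 3 → ℝ := P *ᵥ ξ with hy
  set w : Fin 3 → ℝ := quadBᵀ *ᵥ y with hw
  -- part 1 : 1/γ is in the defining set
  have hmem : (1 / γ) ∈ {l : ℝ | l ∈ Set.Ioc (0 : ℝ) 1 ∧ l • (-(γ • w)) ∈ Vc g Tmax εmax} := by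
    constructor
    · exact ⟨by positivity, by rw [div_le_one hγ0]; exact hγ⟩
    · have : (1 / γ) • (-(γ • w)) = -w := by
        rw [smul_neg, smul_smul, one_div_mul_cancel hγ0.ne', one_smul]
      rw [this]
      apply hball
      simp only [Set.mem_setOf_eq, neg_dotProduct, dotProduct_neg, neg_neg]
      exact hξ
  have hbdd : BddAbove {l : ℝ | l ∈ Set.Ioc (0 : ℝ) 1 ∧ l • (-(γ • w)) ∈ Vc g Tmax εmax} :=
    ⟨1, fun l hl => hl.1.2⟩
  have hlam : 1 / γ ≤ lamStar (Vc g Tmax εmax) (-(γ • w)) := le_csSup hbdd hmem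
  have h1 : 1 ≤ γ * lamStar (Vc g Tmax εmax) (-(γ • w)) := by
    have := mul_le_mul_of_nonneg_left hlam hγ0.le
    rwa [mul_one_div, div_self hγ0.ne'] at this
  refine ⟨h1, ?_⟩
  -- matrix facts
  have hPunit : IsUnit P.det := (Matrix.isUnit_iff_isUnit_det P).1 hP.isUnit
  have hQP : Q * P = 1 := by rw [hQ]; exact Matrix.nonsing_inv_mul P hPunit
  have hQy : Q *ᵥ y = ξ := by rw [hy, mulVec_mulVec, hQP, one_mulVec]
  have hQsym : Qᵀ = Q := by
    rw [hQ, Matrix.transpose_nonsing_inv, hPsym.eq]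
  have hPsym' : Pᵀ = P := hPsym.eq
  -- dot product helpers
  have hyQ : ∀ z, y ⬝ᵥ (Q *ᵥ z) = ξ ⬝ᵥ z := by
    intro z
    rw [dotProduct_mulVec, ← hQsym, vecMul_transpose, hQy]
  have hξP : ∀ z, ξ ⬝ᵥ (P *ᵥ z) = y ⬝ᵥ z := by
    intro z
    rw [dotProduct_mulVec, ← hPsym', vecMul_transpose]
  have hwB : ∀ z, y ⬝ᵥ (quadB *ᵥ z) = w ⬝ᵥ z := by
    intro z
    rw [dotProduct_mulVec, hw, mulVec_transpose]
  -- LMI evaluated at y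
  have hkey := (Matrix.posSemidef_iff_dotProduct_mulVec.1 hLMI).2 y
  simp only [star_trivial, sub_mulVec, add_mulVec, neg_mulVec, smul_mulVec,
    ← mulVec_mulVec, dotProduct_sub, dotProduct_add, dotProduct_neg, dotProduct_smul,
    smul_eq_mul] at hkey
  rw [hyQ, hyQ, hQy, hwB] at hkey
  -- hkey : 0 ≤ -(α * (ξ ⬝ᵥ y)) - (ξ ⬝ᵥ (quadAᵀ *ᵥ y) + y ⬝ᵥ (quadA *ᵥ ξ) - 2 * (w ⬝ᵥ w))
  have hAt : ξ ⬝ᵥ (quadAᵀ *ᵥ y) = y ⬝ᵥ (quadA *ᵥ ξ) := by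
    rw [dotProduct_mulVec, vecMul_transpose, dotProduct_comm]
  rw [hAt] at hkey
  -- expand the goal
  have hsat : sat (Vc g Tmax εmax) (-(γ • w)) =
      -((γ * lamStar (Vc g Tmax εmax) (-(γ • w))) • w) := by
    rw [sat, smul_neg, smul_smul, mul_comm]
  set μ := γ * lamStar (Vc g Tmax εmax) (-(γ • w)) with hμ
  rw [hsat, hξP, dotProduct_add]
  have h2 : y ⬝ᵥ (quadB *ᵥ -(μ • w)) = -(μ * (w ⬝ᵥ w)) := by
    rw [mulVec_neg, dotProduct_neg, mulVec_smul, dotProduct_smul, smul_eq_mul, hwB]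
  rw [h2]
  have hww : 0 ≤ w ⬝ᵥ w := Finset.sum_nonneg fun i _ => mul_self_nonneg _
  nlinarith [hkey, h1, hww, mul_le_mul_of_nonneg_right h1 hww]
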